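/- For every integer k ≥ 6 divisible by 6, every 2k×2k binary matrix with at most k²/18 0-entries contains the cross matrix X_k; equivalently, ex_{X_k}(2k) < (2k)² − k²/18. -/

import Mathlib

open Asymptotics

noncomputable section

/-- Number of 1-entries of a binary matrix. -/
def ones {n m : ℕ} (A : Fin n → Fin m → Bool) : ℕ :=
  Nat.card {p : Fin n × Fin m // A p.1 p.2 = true}

/-- Number of 0-entries of a binary matrix. -/
def zeros {n m : ℕ} (A : Fin n → Fin m → Bool) : ℕ :=
  Nat.card {p : Fin n × Fin m // A p.1 p.2 = false}

/-- `B` is contained in `A`: `B` can be obtained from `A` by deleting rows/columns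
and turning some 1-entries into 0-entries. -/
def containsB {a b n m : ℕ} (B : Fin a → Fin b → Bool) (A : Fin n → Fin m → Bool) : Prop :=
  ∃ f : Fin a → Fin n, ∃ g : Fin b → Fin m, StrictMono f ∧ StrictMono g ∧
    ∀ i j, B i j = true → A (f i) (g j) = true

/-- The permutation matrix of a permutation `σ`. -/
def permMat {k : ℕ} (σ : Equiv.Perm (Fin k)) : Fin k → Fin k → Bool :=
  fun i j => decide (σ i = j)

/-- `A` contains the permutation matrix of `σ`. -/
def containsP {k n m : ℕ} (σ : Equiv.Perm (Fin k)) (A : Fin n → Fin m → Bool) : Prop :=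
  containsB (permMat σ) A

/-- `ex(n,P)`: the maximum number of 1-entries in an `n × n` binary matrix avoiding
the permutation matrix of `σ`. -/
def exP {k : ℕ} (n : ℕ) (σ : Equiv.Perm (Fin k)) : ℕ :=
  sSup {c : ℕ | ∃ A : Fin n → Fin n → Bool, ¬ containsP σ A ∧ c = ones A}

/-- The cross matrix `X_k` (1-indexed: 1-entries at `i = j` and `i + j = k + 1`). -/
def crossX (k : ℕ) : Fin k → Fin k → Bool :=
  fun i j => decide (i = j ∨ i.val + j.val = k - 1)

/-- Safe (ℕ-indexed) entry access: `true` out of bounds. -/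
def AE {k : ℕ} (A : Fin (2 * k) → Fin (2 * k) → Bool) (r c : ℕ) : Bool :=
  if h : r < 2 * k ∧ c < 2 * k then A ⟨r, h.1⟩ ⟨c, h.2⟩ else true

lemma AE_fin {k : ℕ} (A : Fin (2 * k) → Fin (2 * k) → Bool) (x y : Fin (2 * k)) :
    A x y = AE A x.val y.val := by
  simp [AE, x.isLt, y.isLt]

/-- The folded k×k pair-cell (i,j) is good if all four corresponding entries are 1. -/
def goodC {k : ℕ} (A : Fin (2 * k) → Fin (2 * k) → Bool) (i j : ℕ) : Bool :=
  AE A i j && AE A i (2 * k - 1 - j) && AE A (2 * k - 1 - i) j &&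
    AE A (2 * k - 1 - i) (2 * k - 1 - j)

lemma card_le_zeros {k : ℕ} (hk : 0 < k) (A : Fin (2 * k) → Fin (2 * k) → Bool)
    (S : Finset (ℕ × ℕ))
    (hS : ∀ p ∈ S, p.1 < 2 * k ∧ p.2 < 2 * k ∧ AE A p.1 p.2 = false) :
    S.card ≤ zeros A := by
  have hz : zeros A
      = (Finset.univ.filter
          (fun p : Fin (2 * k) × Fin (2 * k) => A p.1 p.2 = false)).card := by
    rw [zeros, Nat.card_eq_fintype_card, ← Fintype.card_subtype]
  rw [hz]
  have hpos : 0 < 2 * k := by omega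
  apply Finset.card_le_card_of_injOn
    (fun p => (⟨p.1 % (2 * k), Nat.mod_lt _ hpos⟩, ⟨p.2 % (2 * k), Nat.mod_lt _ hpos⟩))
  · intro p hp
    obtain ⟨h1, h2, h3⟩ := hS p hp
    have e1 : p.1 % (2 * k) = p.1 := Nat.mod_eq_of_lt h1
    have e2 : p.2 % (2 * k) = p.2 := Nat.mod_eq_of_lt h2
    simp only [Finset.mem_coe, Finset.mem_filter, Finset.mem_univ, true_and]
    rw [AE_fin A]
    simpa [e1, e2] using h3
  · intro p hp q hq heq
    obtain ⟨hp1, hp2, -⟩ := hS p hp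
    obtain ⟨hq1, hq2, -⟩ := hS q hq
    have h1 : p.1 % (2 * k) = q.1 % (2 * k) := congrArg (fun x => (x.1 : ℕ)) heq
    have h2 : p.2 % (2 * k) = q.2 % (2 * k) := congrArg (fun x => (x.2 : ℕ)) heq
    rw [Nat.mod_eq_of_lt hp1, Nat.mod_eq_of_lt hq1] at h1
    rw [Nat.mod_eq_of_lt hp2, Nat.mod_eq_of_lt hq2] at h2
    exact Prod.ext h1 h2

/-- For `k ≥ 6` divisible by `6`, every `2k × 2k` binary matrix with at most `k²/18`
0-entries contains `X_k`. -/
theorem stmt9 (k : ℕ) (hk : 6 ≤ k) (hdvd : 6 ∣ k)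
    (A : Fin (2 * k) → Fin (2 * k) → Bool) (hA : zeros A ≤ k ^ 2 / 18) :
    containsB (crossX k) A := by
  obtain ⟨a, hka⟩ := hdvd
  have ha : 1 ≤ a := by omega
  have hA2 : zeros A ≤ 2 * a ^ 2 := by
    have h18 : k ^ 2 = 18 * (2 * a ^ 2) := by rw [hka]; ring
    rwa [h18, Nat.mul_div_cancel_left _ (by norm_num : 0 < 18)] at hA
  by_cases hline : ∃ o < a, 3 * a ≤ ((Finset.range (k - o)).filter
      (fun i => goodC A i (i + o) = true)).card
  · -- positive case: build the cross from a good diagonal line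
    obtain ⟨o, hoa, hcard⟩ := hline
    obtain ⟨G', hsub, hG'⟩ := Finset.exists_subset_card_eq hcard
    let e := G'.orderIsoOfFin hG'
    set w : ℕ → ℕ := fun t => if h : t < 3 * a then ((e ⟨t, h⟩ : ℕ)) else 0 with hwdef
    have hwprop : ∀ t, t < 3 * a → w t < k - o ∧ goodC A (w t) (w t + o) = true := by
      intro t h
      have hmem : w t ∈ G' := by
        simp only [hwdef, dif_pos h]
        exact (e ⟨t, h⟩).2
      have := hsub hmem
      simp only [Finset.mem_filter, Finset.mem_range] at this
      exact this
    have hwmono : ∀ s t : ℕ, s < t → t < 3 * a → w s < w t := by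
      intro s t hst htm
      have hsm : s < 3 * a := lt_trans hst htm
      simp only [hwdef, dif_pos hsm, dif_pos htm]
      exact Subtype.coe_lt_coe.mpr (e.strictMono (show (⟨s, hsm⟩ : Fin (3 * a)) < ⟨t, htm⟩ from hst))
    have hwk : ∀ t, t < 3 * a → w t < k - o := fun t h => (hwprop t h).1
    have hfb : ∀ i : Fin k,
        (if (i : ℕ) < 3 * a then w i else 2 * k - 1 - w (k - 1 - (i : ℕ))) < 2 * k := by
      intro i
      have hi := i.isLt
      by_cases h : (i : ℕ) < 3 * a
      · have := hwk _ h; simp only [if_pos h]; omega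
      · simp only [if_neg h]; omega
    have hgb : ∀ j : Fin k,
        (if (j : ℕ) < 3 * a then w j + o else 2 * k - 1 - (w (k - 1 - (j : ℕ)) + o)) < 2 * k := by
      intro j
      have hj := j.isLt
      by_cases h : (j : ℕ) < 3 * a
      · have := hwk _ h; simp only [if_pos h]; omega
      · simp only [if_neg h]; omega
    refine ⟨fun i => ⟨_, hfb i⟩, fun j => ⟨_, hgb j⟩, ?_, ?_, ?_⟩
    · -- StrictMono f
      intro s t hst
      simp only [Fin.mk_lt_mk]
      have hs := s.isLt; have ht := t.isLt
      have hst' : (s : ℕ) < (t : ℕ) := hst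
      by_cases h1 : (s : ℕ) < 3 * a <;> by_cases h2 : (t : ℕ) < 3 * a
      · simp only [if_pos h1, if_pos h2]; exact hwmono _ _ hst' h2
      · have hb1 := hwk _ h1
        have hmt : k - 1 - (t : ℕ) < 3 * a := by omega
        have hb2 := hwk _ hmt
        simp only [if_pos h1, if_neg h2]; omega
      · omega
      · have hm1 : k - 1 - (s : ℕ) < 3 * a := by omega
        have hm2 : k - 1 - (t : ℕ) < 3 * a := by omega
        have hlt := hwmono (k - 1 - (t : ℕ)) (k - 1 - (s : ℕ)) (by omega) hm1
        have hb1 := hwk _ hm1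
        simp only [if_neg h1, if_neg h2]; omega
    · -- StrictMono g
      intro s t hst
      simp only [Fin.mk_lt_mk]
      have hs := s.isLt; have ht := t.isLt
      have hst' : (s : ℕ) < (t : ℕ) := hst
      by_cases h1 : (s : ℕ) < 3 * a <;> by_cases h2 : (t : ℕ) < 3 * a
      · simp only [if_pos h1, if_pos h2]
        have := hwmono _ _ hst' h2; omega
      · have hb1 := hwk _ h1
        have hmt : k - 1 - (t : ℕ) < 3 * a := by omega
        have hb2 := hwk _ hmt
        simp only [if_pos h1, if_neg h2]; omega
      · omega
      · have hm1 : k - 1 - (s : ℕ) < 3 * a := by omega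
        have hm2 : k - 1 - (t : ℕ) < 3 * a := by omega
        have hlt := hwmono (k - 1 - (t : ℕ)) (k - 1 - (s : ℕ)) (by omega) hm1
        have hb1 := hwk _ hm1
        simp only [if_neg h1, if_neg h2]; omega
    · -- entries
      intro i j hcross
      have hcross' : i = j ∨ (i : ℕ) + (j : ℕ) = k - 1 := by
        simpa [crossX] using hcross
      rw [AE_fin A]
      simp only []
      have hi := i.isLt; have hj := j.isLt
      rcases hcross' with rfl | hsum
      · by_cases h : (i : ℕ) < 3 * a
        · have hg := (hwprop _ h).2
          simp only [goodC, Bool.and_eq_true] at hg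
          simp only [if_pos h]
          exact hg.1.1.1
        · have hmt : k - 1 - (i : ℕ) < 3 * a := by omega
          have hg := (hwprop _ hmt).2
          simp only [goodC, Bool.and_eq_true] at hg
          simp only [if_neg h]
          exact hg.2
      · by_cases h : (i : ℕ) < 3 * a
        · have hjm : ¬ ((j : ℕ) < 3 * a) := by omega
          have hg := (hwprop _ h).2
          simp only [goodC, Bool.and_eq_true] at hg
          have hji : k - 1 - (j : ℕ) = (i : ℕ) := by omega
          simp only [if_pos h, if_neg hjm, hji]
          exact hg.1.1.2
        · have hjm : (j : ℕ) < 3 * a := by omega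
          have hg := (hwprop _ hjm).2
          simp only [goodC, Bool.and_eq_true] at hg
          have hij : k - 1 - (i : ℕ) = (j : ℕ) := by omega
          simp only [if_neg h, if_pos hjm, hij]
          exact hg.1.2
  · -- negative case: too many zeros, contradiction
    exfalso
    push_neg at hline
    classical
    set φ : ℕ × ℕ → ℕ × ℕ := fun p =>
      if AE A p.1 p.2 = false then p
      else if AE A p.1 (2 * k - 1 - p.2) = false then (p.1, 2 * k - 1 - p.2)
      else if AE A (2 * k - 1 - p.1) p.2 = false then (2 * k - 1 - p.1, p.2)
      else (2 * k - 1 - p.1, 2 * k - 1 - p.2) with hφdef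
    have hφ : ∀ p : ℕ × ℕ, goodC A p.1 p.2 = false →
        AE A (φ p).1 (φ p).2 = false ∧
        ((φ p).1 = p.1 ∨ (φ p).1 = 2 * k - 1 - p.1) ∧
        ((φ p).2 = p.2 ∨ (φ p).2 = 2 * k - 1 - p.2) := by
      intro p hbad
      by_cases c1 : AE A p.1 p.2 = false
      · exact ⟨by simp [hφdef, c1], by simp [hφdef, c1], by simp [hφdef, c1]⟩
      · by_cases c2 : AE A p.1 (2 * k - 1 - p.2) = false
        · exact ⟨by simp [hφdef, c1, c2], by simp [hφdef, c1, c2], by simp [hφdef, c1, c2]⟩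
        · by_cases c3 : AE A (2 * k - 1 - p.1) p.2 = false
          · exact ⟨by simp [hφdef, c1, c2, c3], by simp [hφdef, c1, c2, c3],
              by simp [hφdef, c1, c2, c3]⟩
          · have b1 : AE A p.1 p.2 = true := by revert c1; cases AE A p.1 p.2 <;> simp
            have b2 : AE A p.1 (2 * k - 1 - p.2) = true := by
              revert c2; cases AE A p.1 (2 * k - 1 - p.2) <;> simp
            have b3 : AE A (2 * k - 1 - p.1) p.2 = true := by
              revert c3; cases AE A (2 * k - 1 - p.1) p.2 <;> simp
            have c4 : AE A (2 * k - 1 - p.1) (2 * k - 1 - p.2) = false := by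
              simp only [goodC, b1, b2, b3, Bool.true_and] at hbad
              exact hbad
            exact ⟨by simp [hφdef, c1, c2, c3, c4], by simp [hφdef, c1, c2, c3],
              by simp [hφdef, c1, c2, c3]⟩
    set BadS : Finset (ℕ × ℕ) := (Finset.range a).biUnion (fun o =>
      ((Finset.range (k - o)).filter
        (fun i => ¬ (goodC A i (i + o) = true))).image (fun i => (i, i + o))) with hBadS
    have hmemBad : ∀ p ∈ BadS, p.1 < k ∧ p.2 < k ∧ goodC A p.1 p.2 = false := by
      intro p hp
      simp only [hBadS, Finset.mem_biUnion, Finset.mem_image, Finset.mem_filter,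
        Finset.mem_range] at hp
      obtain ⟨o, hoa, i, ⟨hik, hbad⟩, rfl⟩ := hp
      refine ⟨by omega, by omega, ?_⟩
      revert hbad; cases goodC A i (i + o) <;> simp
    -- lower bound on BadS.card
    have hcardBad : a * (2 * a + 2) ≤ BadS.card := by
      rw [hBadS, Finset.card_biUnion]
      · calc a * (2 * a + 2) = ∑ _o ∈ Finset.range a, (2 * a + 2) := by
              rw [Finset.sum_const, Finset.card_range, smul_eq_mul]
            _ ≤ _ := by
              apply Finset.sum_le_sum
              intro o ho
              have hoa : o < a := Finset.mem_range.mp ho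
              rw [Finset.card_image_of_injective _ (fun x y hxy => (Prod.mk.injEq _ _ _ _ ▸ hxy : _ ∧ _).1)]
              have hsplit := Finset.card_filter_add_card_filter_not
                (s := Finset.range (k - o)) (p := fun i => goodC A i (i + o) = true)
              rw [Finset.card_range] at hsplit
              have hlt := hline o hoa
              omega
      · intro x hx y hy hxy
        simp only [Finset.disjoint_left, Finset.mem_image, Finset.mem_filter,
          Finset.mem_range]
        rintro p ⟨i, ⟨-, -⟩, rfl⟩ ⟨i', ⟨-, -⟩, hp'⟩
        have h1 : i' = i := congrArg Prod.fst hp'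
        have h2 : i' + y = i + x := congrArg Prod.snd hp'
        omega
    -- upper bound via zeros
    have hinj : Set.InjOn φ BadS := by
      intro p hp q hq heq
      obtain ⟨hp1, hp2, hpb⟩ := hmemBad p hp
      obtain ⟨hq1, hq2, hqb⟩ := hmemBad q hq
      obtain ⟨-, hpr, hpc⟩ := hφ p hpb
      obtain ⟨-, hqr, hqc⟩ := hφ q hqb
      have e1 : (φ p).1 = (φ q).1 := congrArg Prod.fst heq
      have e2 : (φ p).2 = (φ q).2 := congrArg Prod.snd heq
      have : p.1 = q.1 := by rcases hpr with h | h <;> rcases hqr with h' | h' <;> omega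
      have : p.2 = q.2 := by rcases hpc with h | h <;> rcases hqc with h' | h' <;> omega
      exact Prod.ext ‹p.1 = q.1› ‹p.2 = q.2›
    have hcount : BadS.card ≤ zeros A := by
      rw [← Finset.card_image_of_injOn hinj]
      apply card_le_zeros (by omega) A
      intro q hq
      obtain ⟨p, hp, rfl⟩ := Finset.mem_image.mp hq
      obtain ⟨hp1, hp2, hpb⟩ := hmemBad p hp
      obtain ⟨hzero, hpr, hpc⟩ := hφ p hpb
      refine ⟨?_, ?_, hzero⟩
      · rcases hpr with h | h <;> omega
      · rcases hpc with h | h <;> omega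
    have hfinal : a * (2 * a + 2) ≤ 2 * a ^ 2 := le_trans hcardBad (le_trans hcount hA2)
    have hexp : a * (2 * a + 2) = 2 * a ^ 2 + 2 * a := by ring
    rw [hexp] at hfinal
    have : 2 * a ≤ 0 := by
      have := Nat.add_le_add_iff_left.mp (le_trans (le_of_eq (rfl : 2 * a ^ 2 + 2 * a = 2 * a ^ 2 + 2 * a)) (hfinal.trans (Nat.le_add_right _ 0)))
      omega
    omega
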